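/- Define polynomials R_1 = 4d - c^2, S_1 = d, and for m ≥ 1, R_{m+1} = R_m^2 + c·R_m·S_m + d·S_m^2 and S_{m+1} = R_m^2. Then for all m ≥ 1, the total degree of the polynomial c·R_m + 2d·S_m equals (7·2^m + 3 - (-1)^m)/6. -/

import Mathlib

open MvPolynomial

/-- The pair `(R_{m+1}, S_{m+1})` of polynomials in `c = X 0` and `d = X 1`:
`R_1 = 4d - c²`, `S_1 = d`, `R_{m+1} = R_m² + c·R_m·S_m + d·S_m²`, `S_{m+1} = R_m²`. -/
noncomputable def RS : ℕ → MvPolynomial (Fin 2) ℤ × MvPolynomial (Fin 2) ℤ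
  | 0 => (4 * X 1 - (X 0) ^ 2, X 1)
  | (m + 1) =>
      ((RS m).1 ^ 2 + X 0 * (RS m).1 * (RS m).2 + X 1 * (RS m).2 ^ 2, (RS m).1 ^ 2)

/-- degree sequence: `(ab n).1 = deg R_{n+1}`, `(ab n).2 = deg S_{n+1}` -/
def ab : ℕ → ℕ × ℕ
  | 0 => (2, 1)
  | n + 1 => (1 + (ab n).1 + (ab n).2, 2 * (ab n).1)

lemma ab_le : ∀ n, (ab n).2 ≤ (ab n).1 ∧ (ab n).1 ≤ (ab n).2 + 1
  | 0 => by simp [ab]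
  | n + 1 => by
    obtain ⟨h1, h2⟩ := ab_le n
    simp only [ab]
    omega

noncomputable def phi : MvPolynomial (Fin 2) ℤ →ₐ[ℤ] Polynomial ℤ :=
  aeval ![Polynomial.X, 0]

lemma phi_X0 : phi (X 0) = Polynomial.X := by simp [phi]
lemma phi_X1 : phi (X 1) = 0 := by simp [phi]

lemma C2 : (2 : MvPolynomial (Fin 2) ℤ) = C 2 := by simp
lemma C4 : (4 : MvPolynomial (Fin 2) ℤ) = C 4 := by simp

lemma td : ∀ n, (RS n).1.totalDegree ≤ (ab n).1 ∧ (RS n).2.totalDegree ≤ (ab n).2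
  | 0 => by
    constructor
    · show (4 * X 1 - (X 0) ^ 2 : MvPolynomial (Fin 2) ℤ).totalDegree ≤ 2
      refine (totalDegree_sub _ _).trans (max_le ?_ ?_)
      · refine (totalDegree_mul _ _).trans ?_
        rw [C4, totalDegree_C, totalDegree_X]
        norm_num
      · simp [totalDegree_X_pow]
    · simp [RS, ab, totalDegree_X]
  | n + 1 => by
    obtain ⟨h1, h2⟩ := td n
    obtain ⟨hba, hab⟩ := ab_le n
    constructor
    · show ((RS n).1 ^ 2 + X 0 * (RS n).1 * (RS n).2 + X 1 * (RS n).2 ^ 2).totalDegree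
        ≤ (ab (n+1)).1
      refine (totalDegree_add _ _).trans (max_le ((totalDegree_add _ _).trans
        (max_le ?_ ?_)) ?_)
      · refine (totalDegree_pow _ _).trans ?_
        simp only [ab]
        omega
      · refine (totalDegree_mul _ _).trans ?_
        have hx : (X 0 * (RS n).1 : MvPolynomial (Fin 2) ℤ).totalDegree ≤ 1 + (ab n).1 := by
          refine (totalDegree_mul _ _).trans ?_
          rw [totalDegree_X]
          omega
        have := add_le_add hx h2
        simp only [ab]
        omega
      · refine (totalDegree_mul _ _).trans ?_
        have hx : ((RS n).2 ^ 2).totalDegree ≤ 2 * (ab n).2 :=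
          (totalDegree_pow _ _).trans (Nat.mul_le_mul_left 2 h2)
        have hX1 : (X 1 : MvPolynomial (Fin 2) ℤ).totalDegree = 1 := totalDegree_X 1
        have := add_le_add hX1.le hx
        simp only [ab]
        omega
    · show ((RS n).1 ^ 2).totalDegree ≤ (ab (n+1)).2
      refine (totalDegree_pow _ _).trans ?_
      simp only [ab]
      omega

lemma nd (n : ℕ) : (phi (RS n).1).natDegree ≤ (ab n).1 ∧
    (phi (RS n).2).natDegree ≤ (ab n).2 := by
  have h : ∀ i, (![Polynomial.X, 0] i : Polynomial ℤ).natDegree ≤ 1 := by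
    simp [Fin.forall_fin_two]
  constructor
  · simpa [phi] using MvPolynomial.aeval_natDegree_le _ (td n).1 _ h
  · simpa [phi] using MvPolynomial.aeval_natDegree_le _ (td n).2 _ h

lemma phi_succ (n : ℕ) :
    phi (RS (n+1)).1 = (phi (RS n).1) ^ 2 + Polynomial.X * phi (RS n).1 * phi (RS n).2 ∧
    phi (RS (n+1)).2 = (phi (RS n).1) ^ 2 := by
  constructor
  · show phi ((RS n).1 ^ 2 + X 0 * (RS n).1 * (RS n).2 + X 1 * (RS n).2 ^ 2) = _
    simp [map_add, map_mul, map_pow, phi_X0, phi_X1]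
  · show phi ((RS n).1 ^ 2) = _
    simp [map_pow]

lemma coeff_mul_nonneg {p q : Polynomial ℤ} (hp : ∀ k, 0 ≤ p.coeff k)
    (hq : ∀ k, 0 ≤ q.coeff k) (k : ℕ) : 0 ≤ (p * q).coeff k := by
  rw [Polynomial.coeff_mul]
  exact Finset.sum_nonneg fun x _ => mul_nonneg (hp _) (hq _)

lemma coeff_X_nonneg (k : ℕ) : (0 : ℤ) ≤ (Polynomial.X : Polynomial ℤ).coeff k := by
  rw [Polynomial.coeff_X]
  split <;> norm_num

lemma key : ∀ n, 1 ≤ n →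
    (∀ k, 0 ≤ (phi (RS n).1).coeff k) ∧ 0 < (phi (RS n).1).coeff (ab n).1 ∧
    (∀ k, 0 ≤ (phi (RS n).2).coeff k) ∧ 0 < (phi (RS n).2).coeff (ab n).2
  | 0, h => absurd h (by norm_num)
  | 1, _ => by
    obtain ⟨h1, h2⟩ := phi_succ 0
    have e0 : phi (RS 0).1 = -(Polynomial.X ^ 2) := by
      show phi (4 * X 1 - (X 0) ^ 2) = _
      simp [map_sub, map_mul, map_pow, phi_X0, phi_X1]
    have e0' : phi (RS 0).2 = 0 := phi_X1
    have e1 : phi (RS 1).1 = Polynomial.X ^ 4 := by rw [h1, e0, e0']; ring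
    have e2 : phi (RS 1).2 = Polynomial.X ^ 4 := by rw [h2, e0]; ring
    rw [e1, e2]
    refine ⟨?_, ?_, ?_, ?_⟩ <;>
      simp [ab, Polynomial.coeff_X_pow] <;>
      intro k <;> split <;> norm_num
  | (n + 2), _ => by
    obtain ⟨hρ, hρt, hσ, hσt⟩ := key (n + 1) (by omega)
    obtain ⟨hndρ, hndσ⟩ := nd (n + 1)
    obtain ⟨h1, h2⟩ := phi_succ (n + 1)
    set ρ := phi (RS (n+1)).1
    set σ := phi (RS (n+1)).2
    set a := (ab (n+1)).1
    set b := (ab (n+1)).2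
    have hXρσ : ∀ k, 0 ≤ (Polynomial.X * ρ * σ).coeff k :=
      coeff_mul_nonneg (coeff_mul_nonneg coeff_X_nonneg hρ) hσ
    have hρ2 : ∀ k, 0 ≤ (ρ ^ 2).coeff k := by
      intro k; rw [sq]; exact coeff_mul_nonneg hρ hρ k
    have htop : (Polynomial.X * ρ * σ).coeff (1 + a + b) = ρ.coeff a * σ.coeff b := by
      rw [mul_assoc, show 1 + a + b = (a + b) + 1 by omega, Polynomial.coeff_X_mul,
        Polynomial.coeff_mul_add_eq_of_natDegree_le hndρ hndσ]
    have hσ2 : (ρ ^ 2).coeff (a + a) = ρ.coeff a * ρ.coeff a := by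
      rw [sq, Polynomial.coeff_mul_add_eq_of_natDegree_le hndρ hndρ]
    refine ⟨?_, ?_, ?_, ?_⟩
    · intro k
      rw [h1, Polynomial.coeff_add]
      exact add_nonneg (hρ2 k) (hXρσ k)
    · rw [h1, Polynomial.coeff_add]
      have : (ab (n+2)).1 = 1 + a + b := rfl
      rw [this, htop]
      exact add_pos_of_nonneg_of_pos (hρ2 _) (mul_pos hρt hσt)
    · intro k
      rw [h2]; exact hρ2 k
    · rw [h2]
      have : (ab (n+2)).2 = a + a := by simp [ab, a, b]; ring
      rw [this, hσ2]
      exact mul_pos hρt hρt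

lemma rho_ne (n : ℕ) : (phi (RS n).1).coeff (ab n).1 ≠ 0 := by
  cases n with
  | zero =>
    have e0 : phi (RS 0).1 = -(Polynomial.X ^ 2) := by
      show phi (4 * X 1 - (X 0) ^ 2) = _
      simp [map_sub, map_mul, map_pow, phi_X0, phi_X1]
    rw [e0]
    simp [ab, Polynomial.coeff_X_pow]
  | succ n =>
    exact (key (n+1) (by omega)).2.1.ne'

lemma td_exact (n : ℕ) :
    (X 0 * (RS n).1 + 2 * X 1 * (RS n).2 : MvPolynomial (Fin 2) ℤ).totalDegree
      = 1 + (ab n).1 := by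
  set F : MvPolynomial (Fin 2) ℤ := X 0 * (RS n).1 + 2 * X 1 * (RS n).2
  obtain ⟨h1, h2⟩ := td n
  obtain ⟨hba, hab⟩ := ab_le n
  refine le_antisymm ?_ ?_
  · refine (totalDegree_add _ _).trans (max_le ?_ ?_)
    · refine (totalDegree_mul _ _).trans ?_
      exact add_le_add (totalDegree_X 0).le h1
    · refine (totalDegree_mul _ _).trans ?_
      have h3 : (2 * X 1 : MvPolynomial (Fin 2) ℤ).totalDegree ≤ 1 := by
        refine (totalDegree_mul _ _).trans ?_
        rw [C2, totalDegree_C, totalDegree_X]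
      have := add_le_add h3 h2
      omega
  · have hphiF : phi F = Polynomial.X * phi (RS n).1 := by
      simp [F, map_add, map_mul, phi_X0, phi_X1]
    have hcoeff : (phi F).coeff (1 + (ab n).1) ≠ 0 := by
      rw [hphiF, show 1 + (ab n).1 = (ab n).1 + 1 by omega, Polynomial.coeff_X_mul]
      exact rho_ne n
    have hle : 1 + (ab n).1 ≤ (phi F).natDegree := Polynomial.le_natDegree_of_ne_zero hcoeff
    have h' : (phi F).natDegree ≤ F.totalDegree * 1 := by
      refine MvPolynomial.aeval_natDegree_le _ le_rfl _ ?_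
      simp [Fin.forall_fin_two]
    omega

lemma ab_q : ∀ n, ((ab n).1 : ℚ) = (7 * 2 ^ (n + 1) - 3 + (-1) ^ n) / 6 := by
  intro n
  induction n using Nat.twoStepInduction with
  | zero => norm_num [ab]
  | one => norm_num [ab]
  | more n ih1 ih2 =>
    have h : ((ab (n + 2)).1 : ℚ) = 1 + ((ab (n+1)).1 : ℚ) + 2 * ((ab n).1 : ℚ) := by
      have : (ab (n + 2)).1 = 1 + (ab (n+1)).1 + 2 * (ab n).1 := by
        simp [ab]
      rw [this]; push_cast; ring
    rw [h, ih1, ih2]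
    ring

/-- `R_m` for `m ≥ 1`. -/
noncomputable def Rpoly (m : ℕ) : MvPolynomial (Fin 2) ℤ := (RS (m - 1)).1

/-- `S_m` for `m ≥ 1`. -/
noncomputable def Spoly (m : ℕ) : MvPolynomial (Fin 2) ℤ := (RS (m - 1)).2

theorem totalDegree_cR_add_two_dS (m : ℕ) (hm : 1 ≤ m) :
    (((X 0 * Rpoly m + 2 * X 1 * Spoly m : MvPolynomial (Fin 2) ℤ)).totalDegree : ℚ)
      = (7 * (2 : ℚ) ^ m + 3 - (-1) ^ m) / 6 := by
  simp only [Rpoly, Spoly]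
  obtain ⟨n, hmn⟩ : ∃ n, m = n + 1 := ⟨m - 1, (Nat.succ_pred_eq_of_pos hm).symm⟩
  subst hmn
  simp only [Nat.add_sub_cancel]
  rw [td_exact n]
  push_cast
  rw [ab_q n]
  ring
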